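/- Every congruence ρ on the commutative monoid ℕ^P (P finite) is generated by the set ρ_B of minimal elements (with respect to the componentwise product order on pairs) of {(r,s) ∈ ρ | r ≠ s}; that is, the least congruence containing ρ_B equals ρ. -/

import Mathlib

/-- A congruence on `ℕ^P`, given as a set of pairs: an equivalence compatible with addition. -/
def IsCongS {P : Type} (ρ : Set ((P → ℕ) × (P → ℕ))) : Prop :=
  Equivalence (fun r s => (r, s) ∈ ρ) ∧ ∀ r₁ r₂ s, (r₁, r₂) ∈ ρ → (r₁ + s, r₂ + s) ∈ ρ

/-- The basis `ρ_B` of `ρ`: the minimal elements (w.r.t. the componentwise product order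
on pairs) of the set of non-identity pairs of `ρ`. -/
def basisOf {P : Type} (ρ : Set ((P → ℕ) × (P → ℕ))) : Set ((P → ℕ) × (P → ℕ)) :=
  {q | q ∈ ρ ∧ q.1 ≠ q.2 ∧ ∀ q', q' ∈ ρ → q'.1 ≠ q'.2 → q' ≤ q → q' = q}

private lemma add_lt_add_right_of_ocacm {α : Type*} [AddCommMonoid α] [PartialOrder α] [IsOrderedCancelAddMonoid α]
    (a b c : α) (h : a < b) : a + c < b + c :=
  lt_of_le_of_ne (add_le_add h.le (le_refl c)) (fun hh => absurd (add_right_cancel hh) h.ne)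

private lemma sum_lt_of_le_of_ne {P : Type} [Fintype P] (f g : P → ℕ)
    (hle : f ≤ g) (hne : f ≠ g) : (∑ i, f i) < ∑ i, g i := by
  obtain ⟨i, hi⟩ : ∃ i, f i ≠ g i := by
    by_contra h
    push_neg at h
    exact hne (funext h)
  exact Finset.sum_lt_sum (fun j _ => hle j) ⟨i, Finset.mem_univ i, lt_of_le_of_ne (hle i) hi⟩

/-- Every non-identity pair of `ρ` lies above some element of the basis. -/
private lemma exists_basis_le {P : Type} [Fintype P] (ρ : Set ((P → ℕ) × (P → ℕ)))
    (p : (P → ℕ) × (P → ℕ)) (hp : p ∈ ρ) (hne : p.1 ≠ p.2) :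
    ∃ q ∈ basisOf ρ, q ≤ p := by
  have main : ∀ n (p : (P → ℕ) × (P → ℕ)), (∑ i, p.1 i) + (∑ i, p.2 i) = n →
      p ∈ ρ → p.1 ≠ p.2 → ∃ q ∈ basisOf ρ, q ≤ p := by
    intro n
    induction n using Nat.strong_induction_on with
    | _ n IH =>
      intro p hNp hp hne
      by_cases hmin : ∀ q' ∈ ρ, q'.1 ≠ q'.2 → q' ≤ p → q' = p
      · exact ⟨p, ⟨hp, hne, hmin⟩, le_refl p⟩
      · push_neg at hmin
        obtain ⟨q', hq'ρ, hq'ne, hq'le, hq'ne2⟩ := hmin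
        have hlt : (∑ i, q'.1 i) + (∑ i, q'.2 i) < n := by
          subst hNp
          have h1 : (∑ i, q'.1 i) ≤ ∑ i, p.1 i :=
            Finset.sum_le_sum (fun j _ => hq'le.1 j)
          have h2 : (∑ i, q'.2 i) ≤ ∑ i, p.2 i :=
            Finset.sum_le_sum (fun j _ => hq'le.2 j)
          have : q'.1 ≠ p.1 ∨ q'.2 ≠ p.2 := by
            by_contra h
            push_neg at h
            exact hq'ne2 (Prod.ext h.1 h.2)
          rcases this with h | h
          · exact Nat.add_lt_add_of_lt_of_le (sum_lt_of_le_of_ne _ _ hq'le.1 h) h2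
          · exact Nat.add_lt_add_of_le_of_lt h1 (sum_lt_of_le_of_ne _ _ hq'le.2 h)
        obtain ⟨q, hqB, hqle⟩ := IH _ hlt q' rfl hq'ρ hq'ne
        exact ⟨q, hqB, le_trans hqle hq'le⟩
  exact main _ p rfl hp hne


private def Fmap {P : Type} {n : ℕ} (e : P ≃ Fin n) (a : P → ℕ) : Lex (Fin n → ℕ) :=
  toLex (fun i => a (e.symm i))

private def Mlt {P : Type} {n : ℕ} (e : P ≃ Fin n) (a b : P → ℕ) : Prop :=
  Fmap e a < Fmap e b

private lemma mlt_wf {P : Type} {n : ℕ} (e : P ≃ Fin n) : WellFounded (Mlt e) :=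
  InvImage.wf (Fmap e) IsWellFounded.wf

private lemma fmap_injective {P : Type} {n : ℕ} (e : P ≃ Fin n) :
    Function.Injective (Fmap e) := by
  intro a b hab
  funext p
  have := congrFun (congrArg ofLex hab) (e p)
  simpa [Fmap] using this

private lemma mlt_tri {P : Type} {n : ℕ} (e : P ≃ Fin n) (a b : P → ℕ) (hab : a ≠ b) :
    Mlt e a b ∨ Mlt e b a := by
  haveI hwf : WellFoundedLT (Fin n) := inferInstance
  letI : LinearOrder (Lex (Fin n → ℕ)) :=
    @Pi.Lex.linearOrder (Fin n) (fun _ => ℕ) inferInstance hwf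
      (fun _ => inferInstance)
  have hne : Fmap e a ≠ Fmap e b := fun h => hab (fmap_injective e h)
  rcases lt_or_gt_of_ne (a := Fmap e a) (b := Fmap e b) hne with h | h
  · exact Or.inl h
  · exact Or.inr h

private lemma mlt_add {P : Type} {n : ℕ} (e : P ≃ Fin n) (a b u : P → ℕ) (h : Mlt e a b) :
    Mlt e (a + u) (b + u) := by
  haveI : IsOrderedCancelAddMonoid (Lex (Fin n → ℕ)) :=
    inferInstance
  have hFa : Fmap e (a + u) = Fmap e a + Fmap e u := rfl
  have hFb : Fmap e (b + u) = Fmap e b + Fmap e u := rfl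
  show Fmap e (a + u) < Fmap e (b + u)
  rw [hFa, hFb]
  exact add_lt_add_right_of_ocacm _ _ _ h

/-- Every congruence `ρ` on `ℕ^P` (for finite `P`) is generated by its basis `ρ_B`:
the least congruence containing `ρ_B` equals `ρ`. -/
theorem congruence_generated_by_basis {P : Type} [Fintype P]
    (ρ : Set ((P → ℕ) × (P → ℕ))) (hρ : IsCongS ρ) :
    ⋂₀ {σ | IsCongS σ ∧ basisOf ρ ⊆ σ} = ρ := by
  apply subset_antisymm
  · exact Set.sInter_subset_of_mem ⟨hρ, fun q hq => hq.1⟩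
  · -- the hard direction: ρ ⊆ every congruence containing the basis
    intro q hq
    rw [Set.mem_sInter]
    rintro σ ⟨hσ, hB⟩
    set e : P ≃ Fin (Fintype.card P) := Fintype.equivFin P with he
    have wf : WellFounded (Mlt e) := mlt_wf e
    -- the key claim
    have key : ∀ a m : P → ℕ, (a, m) ∈ ρ → (∀ x, (a, x) ∈ ρ → ¬ Mlt e x m) → (a, m) ∈ σ := by
      intro a
      induction a using WellFounded.induction wf with
      | _ a IH =>
        intro m ham hmin
        by_cases haem : a = m
        · subst haem
          exact hσ.1.refl a
        · obtain ⟨⟨c, d⟩, hBcd, hle⟩ := exists_basis_le ρ (a, m) ham haem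
          have hca : c ≤ a := hle.1
          have hdm : d ≤ m := hle.2
          have hcd_ρ : (c, d) ∈ ρ := hBcd.1
          have hcd_ne : c ≠ d := hBcd.2.1
          have hcd_σ : (c, d) ∈ σ := hB hBcd
          -- show d ≺ c
          have hdc : Mlt e d c := by
            rcases mlt_tri e c d hcd_ne with h | h
            · exfalso
              set w : P → ℕ := fun i => m i - d i with hw
              have hdw : d + w = m := by
                funext i
                exact Nat.add_sub_cancel' (hdm i)
              have hcw : (c + w, m) ∈ ρ := by
                have := hρ.2 c d w hcd_ρ
                rwa [hdw] at this
              have hacw : (a, c + w) ∈ ρ := hρ.1.trans ham (hρ.1.symm hcw)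
              have : Mlt e (c + w) m := by
                have := mlt_add e c d w h
                rwa [hdw] at this
              exact hmin (c + w) hacw this
            · exact h
          -- reduce a to a' := d + (a - c)
          set u : P → ℕ := fun i => a i - c i with hu
          have hcu : c + u = a := by
            funext i
            exact Nat.add_sub_cancel' (hca i)
          set a' : P → ℕ := d + u with ha'
          have haa'_σ : (a, a') ∈ σ := by
            have := hσ.2 c d u hcd_σ
            rwa [hcu] at this
          have haa'_ρ : (a, a') ∈ ρ := by
            have := hρ.2 c d u hcd_ρ
            rwa [hcu] at this
          have ha'lt : Mlt e a' a := by
            have := mlt_add e d c u hdc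
            rwa [hcu] at this
          have ha'm : (a', m) ∈ ρ := hρ.1.trans (hρ.1.symm haa'_ρ) ham
          have hmin' : ∀ x, (a', x) ∈ ρ → ¬ Mlt e x m := by
            intro x hx
            exact hmin x (hρ.1.trans haa'_ρ hx)
          exact hσ.1.trans haa'_σ (IH a' ha'lt m ha'm hmin')
    -- conclude using the minimum of the common class
    obtain ⟨a, b⟩ := q
    have hab : (a, b) ∈ ρ := hq
    set S : Set (P → ℕ) := {x | (a, x) ∈ ρ} with hS
    have hSne : S.Nonempty := ⟨b, hab⟩
    set m : P → ℕ := wf.min S hSne with hm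
    have hamρ : (a, m) ∈ ρ := wf.min_mem S hSne
    have h1 : (a, m) ∈ σ := key a m hamρ (fun x hx => wf.not_lt_min S hx)
    have hbmρ : (b, m) ∈ ρ := hρ.1.trans (hρ.1.symm hab) hamρ
    have h2 : (b, m) ∈ σ := key b m hbmρ (fun x hx =>
      wf.not_lt_min S (hρ.1.trans hab hx))
    exact hσ.1.trans h1 (hσ.1.symm h2)
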